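/- Let N be a positive even integer. Then the degree-N/2 polynomial P_N is palindromic: its coefficients c_k = (−N/2)_k (N/2+1)_k / ((−N)_k · k!) satisfy c_k = c_{N/2−k} for all 0 ≤ k ≤ N/2; equivalently, z^{N/2} P_N(1/z) = P_N(z) for all z ≠ 0. -/

import Mathlib

open Polynomial Finset

noncomputable section

/-- The rising Pochhammer symbol `(q)_k = q(q+1)⋯(q+k-1)` over `ℚ`. -/
def poch (q : ℚ) (k : ℕ) : ℚ := (ascPochhammer ℚ k).eval q

/-- Coefficient of `z^k` in `P_N(z) = ₂F₁(-N/2, N/2+1; -N; z)`. -/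
def Pcoef (N k : ℕ) : ℚ :=
  poch (-(N : ℚ) / 2) k * poch ((N : ℚ) / 2 + 1) k /
    (poch (-(N : ℚ)) k * (Nat.factorial k : ℚ))

/-- The polynomial `P_N(z)`. -/
def Ppoly (N : ℕ) : ℚ[X] := ∑ k ∈ Finset.range (N / 2 + 1), C (Pcoef N k) * X ^ k

lemma poch_zero' (q : ℚ) : poch q 0 = 1 := by simp [poch]

lemma poch_succ (q : ℚ) (k : ℕ) : poch q (k + 1) = poch q k * (q + k) := by
  simp [poch, ascPochhammer_succ_right]

lemma pochA (m k : ℕ) :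
    poch ((m : ℚ) + 1) k * (m.factorial : ℚ) = ((m + k).factorial : ℚ) := by
  induction k with
  | zero => simp [poch_zero']
  | succ k ih =>
    rw [poch_succ]
    have e : m + (k + 1) = (m + k) + 1 := by ring
    rw [e, Nat.factorial_succ]
    push_cast
    linear_combination ((m : ℚ) + 1 + k) * ih

lemma pochB (n : ℕ) : ∀ k ≤ n,
    poch (-(n : ℚ)) k * ((n - k).factorial : ℚ) = (-1) ^ k * (n.factorial : ℚ) := by
  intro k
  induction k with
  | zero => simp [poch_zero']
  | succ k ih =>
    intro hk
    have hk' : k ≤ n := by omega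
    have ih' := ih hk'
    rw [poch_succ]
    have hsub : n - k = (n - (k + 1)) + 1 := by omega
    have hfac : ((n - k).factorial : ℚ) = ((n - (k + 1)).factorial : ℚ) * ((n : ℚ) - k) := by
      rw [hsub, Nat.factorial_succ]
      push_cast [Nat.cast_sub hk]
      ring
    rw [hfac] at ih'
    linear_combination (-1 : ℚ) * ih'

lemma fact_ne (n : ℕ) : (n.factorial : ℚ) ≠ 0 := by
  exact_mod_cast n.factorial_ne_zero

lemma Pcoef_eq (m k : ℕ) (hk : k ≤ m) :
    Pcoef (2 * m) k =
      (((m + k).factorial : ℚ) * ((2 * m - k).factorial : ℚ)) /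
        (((m - k).factorial : ℚ) * ((2 * m).factorial : ℚ) * (k.factorial : ℚ)) := by
  have h1 := pochA m k
  have h2 := pochB m k hk
  have h3 := pochB (2 * m) k (by omega)
  unfold Pcoef
  have e1 : -((2 * m : ℕ) : ℚ) / 2 = -(m : ℚ) := by push_cast; ring
  have e2 : ((2 * m : ℕ) : ℚ) / 2 + 1 = (m : ℚ) + 1 := by push_cast; ring
  rw [e1, e2]
  have hB : poch ((m : ℚ) + 1) k = ((m + k).factorial : ℚ) / (m.factorial : ℚ) :=
    (eq_div_iff (fact_ne m)).2 h1
  have hA : poch (-(m : ℚ)) k = (-1) ^ k * (m.factorial : ℚ) / ((m - k).factorial : ℚ) := by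
    rw [eq_div_iff (fact_ne (m - k))]; linarith [h2]
  have hC : poch (-((2 * m : ℕ) : ℚ)) k =
      (-1) ^ k * ((2 * m).factorial : ℚ) / ((2 * m - k).factorial : ℚ) := by
    rw [eq_div_iff (fact_ne (2 * m - k))]
    push_cast at h3 ⊢
    linarith [h3]
  rw [hA, hB, hC]
  have hs : ((-1 : ℚ)) ^ k ≠ 0 := by
    simp
  field_simp

theorem stmt16 (N : ℕ) (hN : 0 < N) (heven : Even N) :
    (∀ k ≤ N / 2, Pcoef N k = Pcoef N (N / 2 - k)) ∧
    ∀ z : ℚ, z ≠ 0 → z ^ (N / 2) * (Ppoly N).eval (1 / z) = (Ppoly N).eval z := by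
  obtain ⟨m, hm⟩ := heven
  have hNm : N = 2 * m := by omega
  subst hNm
  have hdiv : 2 * m / 2 = m := by omega
  have key : ∀ k ≤ m, Pcoef (2 * m) k = Pcoef (2 * m) (m - k) := by
    intro k hk
    rw [Pcoef_eq m k hk, Pcoef_eq m (m - k) (by omega)]
    have e1 : m + (m - k) = 2 * m - k := by omega
    have e2 : 2 * m - (m - k) = m + k := by omega
    have e3 : m - (m - k) = k := by omega
    rw [e1, e2, e3]
    ring
  constructor
  · intro k hk
    rw [hdiv] at hk ⊢
    exact key k hk
  · intro z hz
    rw [hdiv]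
    simp only [Ppoly, hdiv, eval_finset_sum, eval_mul, eval_C, eval_pow, eval_X,
      Finset.mul_sum]
    rw [← Finset.sum_range_reflect (fun k => Pcoef (2 * m) k * z ^ k) (m + 1)]
    refine Finset.sum_congr rfl ?_
    intro k hkmem
    have hk : k ≤ m := by
      simp only [Finset.mem_range] at hkmem; omega
    have e : m + 1 - 1 - k = m - k := by omega
    rw [e, ← key k hk]
    have hzpow : z ^ m = z ^ (m - k) * z ^ k := by
      rw [← pow_add]; congr 1; omega
    rw [hzpow]
    field_simp
    rw [mul_comm (z ^ k), mul_assoc, ← mul_pow, mul_one_div_cancel hz, one_pow, mul_one]
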